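/- Fix real numbers t < T, y, m, v, γ, σ > 0, q₁, q₂, p₁, p₂, p₃, and β ≥ 0, and define the market maker's Hamiltonian as a function of κ ∈ ℝ by H^M(κ) = −κ(T−t)·y·(v − m − κ(T−t)y)·β + κ·y² + (v − m − κ(T−t)y)·β·p₁ + σ·q₁ + (γβ/σ²)·(v−m)·β·p₂ + (γβ/σ)·q₂ − (β²γ²/σ²)·p₃. Then H^M is a convex function of κ on ℝ, and consequently, for every K ≥ 0, the maximum of H^M over the interval [0,K] is attained at κ = 0 or at κ = K. (This is the κ-component of the Nash-equilibrium characterization: in any equilibrium κ* = 0 or κ* = K.) -/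
import Mathlib


/-- The market maker's Hamiltonian as a function of the fee parameter `κ`. -/
noncomputable def HM (t T y m v γ σ q₁ q₂ p₁ p₂ p₃ β κ : ℝ) : ℝ :=
  -κ * (T - t) * y * (v - m - κ * (T - t) * y) * β + κ * y ^ 2
    + (v - m - κ * (T - t) * y) * β * p₁ + σ * q₁
    + (γ * β / σ ^ 2) * (v - m) * β * p₂ + (γ * β / σ) * q₂
    - (β ^ 2 * γ ^ 2 / σ ^ 2) * p₃

/-- `H^M` is convex in `κ`, hence its maximum over `[0,K]` is
attained at `κ = 0` or at `κ = K`. -/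
theorem market_maker_hamiltonian_convex_max_at_endpoints
    (t T y m v γ σ q₁ q₂ p₁ p₂ p₃ β : ℝ)
    (htT : t < T) (hσ : 0 < σ) (hβ : 0 ≤ β) :
    ConvexOn ℝ Set.univ (HM t T y m v γ σ q₁ q₂ p₁ p₂ p₃ β) ∧
    ∀ K : ℝ, 0 ≤ K →
      IsMaxOn (HM t T y m v γ σ q₁ q₂ p₁ p₂ p₃ β) (Set.Icc 0 K) 0 ∨
      IsMaxOn (HM t T y m v γ σ q₁ q₂ p₁ p₂ p₃ β) (Set.Icc 0 K) K := by
  have hA : (0:ℝ) ≤ (T - t) ^ 2 * y ^ 2 * β := by positivity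
  have hconv : ConvexOn ℝ Set.univ (HM t T y m v γ σ q₁ q₂ p₁ p₂ p₃ β) := by
    refine ⟨convex_univ, ?_⟩
    intro x _ z _ a b ha hb hab
    simp only [HM, smul_eq_mul]
    have hb' : b = 1 - a := by linarith
    subst hb'
    nlinarith [mul_nonneg (mul_nonneg (mul_nonneg ha hb) hA) (sq_nonneg (x - z))]
  refine ⟨hconv, fun K hK => ?_⟩
  set f := HM t T y m v γ σ q₁ q₂ p₁ p₂ p₃ β
  rcases le_total (f K) (f 0) with h | h
  · left
    intro z hz
    have hseg : z ∈ segment ℝ (0:ℝ) K := by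
      rw [segment_eq_Icc hK]; exact hz
    rcases hseg with ⟨a, b, ha, hb, hab, hz'⟩
    have := hconv.le_on_segment' (x := (0:ℝ)) (y := K) trivial trivial ha hb hab
    simp only [hz'] at this
    exact le_trans this (max_le le_rfl h)
  · right
    intro z hz
    have hseg : z ∈ segment ℝ (0:ℝ) K := by
      rw [segment_eq_Icc hK]; exact hz
    rcases hseg with ⟨a, b, ha, hb, hab, hz'⟩
    have := hconv.le_on_segment' (x := (0:ℝ)) (y := K) trivial trivial ha hb hab
    simp only [hz'] at this
    exact le_trans this (max_le h le_rfl)
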